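/- Let (a_n)_{n≥0} be a sequence of non-negative real numbers and let p ∈ (0,1). If the sequence of p-binomial means (a^p_n)_{n≥0} converges to a real number a, then the sequence of arithmetic means (a*_n)_{n≥0} also converges to a. -/

import Mathlib

open Filter Finset


noncomputable def bb (p : ℝ) (n k : ℕ) : ℝ := (n.choose k : ℝ) * p ^ k * (1 - p) ^ (n - k)

lemma bb_nonneg {p : ℝ} (h0 : 0 ≤ p) (h1 : p ≤ 1) (n k : ℕ) : 0 ≤ bb p n k := by
  unfold bb
  apply mul_nonneg (mul_nonneg (by positivity) (pow_nonneg h0 _))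
  exact pow_nonneg (by linarith) _

lemma sum_bb (p : ℝ) (n : ℕ) : ∑ k ∈ range (n + 1), bb p n k = 1 := by
  have := add_pow p (1 - p) n
  simp only [add_sub_cancel, one_pow] at this
  calc ∑ k ∈ range (n + 1), bb p n k
      = ∑ m ∈ range (n + 1), p ^ m * (1 - p) ^ (n - m) * (n.choose m : ℝ) := by
        apply Finset.sum_congr rfl; intro k _; unfold bb; ring
    _ = 1 := this.symm

lemma sum_k_bb (p : ℝ) (n : ℕ) :
    ∑ k ∈ range (n + 1), (k : ℝ) * bb p n k = n * p := by
  induction n with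
  | zero => simp [bb]
  | succ m _ =>
    rw [Finset.sum_range_succ']
    simp only [Nat.cast_zero, zero_mul, add_zero]
    have hterm : ∀ j ∈ range (m + 1), ((j + 1 : ℕ) : ℝ) * bb p (m + 1) (j + 1)
        = ((m : ℝ) + 1) * p * bb p m j := by
      intro j hj
      simp only [mem_range] at hj
      have hc : (m + 1) * Nat.choose m j = Nat.choose (m + 1) (j + 1) * (j + 1) :=
        Nat.add_one_mul_choose_eq m j
      have hc' : ((m : ℝ) + 1) * (Nat.choose m j : ℝ) = (Nat.choose (m + 1) (j + 1) : ℝ) * ((j : ℝ) + 1) := by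
        exact_mod_cast congrArg (Nat.cast : ℕ → ℝ) hc
      unfold bb
      have hsub : m + 1 - (j + 1) = m - j := by omega
      rw [hsub]
      push_cast
      linear_combination (-(p ^ (j + 1) * (1 - p) ^ (m - j))) * hc'
    rw [Finset.sum_congr rfl hterm, ← Finset.mul_sum, sum_bb]
    push_cast
    ring

lemma sum_kk_bb (p : ℝ) (n : ℕ) :
    ∑ k ∈ range (n + 1), (k : ℝ) * ((k : ℝ) - 1) * bb p n k = n * ((n:ℝ) - 1) * p ^ 2 := by
  induction n with
  | zero => simp [bb]
  | succ m _ =>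
    rw [Finset.sum_range_succ']
    simp only [Nat.cast_zero, zero_mul, add_zero]
    have hterm : ∀ j ∈ range (m + 1), ((j + 1 : ℕ) : ℝ) * (((j + 1 : ℕ) : ℝ) - 1) * bb p (m + 1) (j + 1)
        = ((m : ℝ) + 1) * p * ((j : ℝ) * bb p m j) := by
      intro j hj
      simp only [mem_range] at hj
      have hc : (m + 1) * Nat.choose m j = Nat.choose (m + 1) (j + 1) * (j + 1) :=
        Nat.add_one_mul_choose_eq m j
      have hc' : ((m : ℝ) + 1) * (Nat.choose m j : ℝ) = (Nat.choose (m + 1) (j + 1) : ℝ) * ((j : ℝ) + 1) := by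
        exact_mod_cast congrArg (Nat.cast : ℕ → ℝ) hc
      unfold bb
      have hsub : m + 1 - (j + 1) = m - j := by omega
      rw [hsub]
      push_cast
      linear_combination (-((j:ℝ) * p ^ (j + 1) * (1 - p) ^ (m - j))) * hc'
    rw [Finset.sum_congr rfl hterm, ← Finset.mul_sum, sum_k_bb]
    push_cast
    ring

lemma sum_var_bb (p : ℝ) (n : ℕ) :
    ∑ k ∈ range (n + 1), ((k : ℝ) - n * p) ^ 2 * bb p n k = n * p * (1 - p) := by
  have h0 := sum_bb p n
  have h1 := sum_k_bb p n
  have h2 := sum_kk_bb p n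
  have : ∀ k ∈ range (n+1), ((k : ℝ) - n * p) ^ 2 * bb p n k
      = (k:ℝ) * ((k:ℝ)-1) * bb p n k + (1 - 2 * n * p) * ((k:ℝ) * bb p n k) + (n*p)^2 * bb p n k := by
    intro k _; ring
  rw [Finset.sum_congr rfl this, Finset.sum_add_distrib, Finset.sum_add_distrib,
    ← Finset.mul_sum, ← Finset.mul_sum, h0, h1, h2]
  ring


lemma bb_big (p : ℝ) {n k : ℕ} (h : n < k) : bb p n k = 0 := by
  unfold bb
  rw [Nat.choose_eq_zero_of_lt h]
  simp

lemma pascal_step (p : ℝ) (N i : ℕ) :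
    ∑ k ∈ range (N + 3), (if i < k then bb p (N + 2) k else 0)
      = (∑ k ∈ range (N + 2), (if i < k then bb p (N + 1) k else 0)) + p * bb p (N + 1) i := by
  set R := ∑ k ∈ range (N + 2), (if i < k then bb p (N + 1) k else 0) with hR
  rw [Finset.sum_range_succ']
  simp only [Nat.lt_irrefl, if_neg (Nat.not_lt_zero i), add_zero]
  have hsplit : ∀ j ∈ range (N + 2), (if i < j + 1 then bb p (N + 2) (j + 1) else 0)
      = (if i ≤ j then p * bb p (N + 1) j else 0)
        + (if i < j + 1 then (1 - p) * bb p (N + 1) (j + 1) else 0) := by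
    intro j hj
    simp only [mem_range] at hj
    have hb : bb p (N + 2) (j + 1) = p * bb p (N + 1) j + (1 - p) * bb p (N + 1) (j + 1) := by
      by_cases hjN : j ≤ N
      · unfold bb
        rw [Nat.choose_succ_succ (N + 1) j]
        have h1 : N + 2 - (j + 1) = (N - j) + 1 := by omega
        have h2 : N + 1 - j = (N - j) + 1 := by omega
        have h3 : N + 1 - (j + 1) = N - j := by omega
        rw [h1, h2, h3]
        push_cast
        ring
      · have hj' : j = N + 1 := by omega
        subst hj'
        rw [bb_big p (show N + 1 < N + 1 + 1 by omega)]
        unfold bb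
        simp only [Nat.choose_self, Nat.sub_self, Nat.cast_one, pow_zero]
        ring
    rw [hb]
    by_cases hij : i ≤ j
    · rw [if_pos hij, if_pos (by omega), if_pos (by omega)]
    · rw [if_neg hij, if_neg (by omega), if_neg (by omega)]
      ring
  rw [Finset.sum_congr rfl hsplit, Finset.sum_add_distrib]
  have hfirst : ∑ j ∈ range (N + 2), (if i ≤ j then p * bb p (N + 1) j else 0)
      = p * (R + bb p (N + 1) i) := by
    have h1 : ∀ j ∈ range (N + 2), (if i ≤ j then p * bb p (N + 1) j else 0)
        = (if i < j then p * bb p (N + 1) j else 0) + (if j = i then p * bb p (N + 1) j else 0) := by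
      intro j _
      rcases lt_trichotomy i j with h | h | h
      · rw [if_pos h.le, if_pos h, if_neg (by omega)]; ring
      · rw [if_pos h.le, if_neg (by omega), if_pos h.symm]; ring
      · rw [if_neg (by omega), if_neg (by omega), if_neg (by omega)]; ring
    rw [Finset.sum_congr rfl h1, Finset.sum_add_distrib, Finset.sum_ite_eq' (range (N + 2)) i]
    by_cases hi : i ∈ range (N + 2)
    · rw [if_pos hi, mul_add]
      congr 1
      rw [hR, Finset.mul_sum]
      apply Finset.sum_congr rfl; intro j _
      split <;> ring
    · rw [if_neg hi]
      simp only [mem_range, not_lt] at hi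
      rw [bb_big p (show N + 1 < i by omega)]
      simp only [add_zero, mul_zero]
      rw [hR, Finset.mul_sum]
      apply Finset.sum_congr rfl; intro j _
      split <;> ring
  have hsecond : ∑ j ∈ range (N + 2), (if i < j + 1 then (1 - p) * bb p (N + 1) (j + 1) else 0)
      = (1 - p) * R := by
    have h2 : (∑ k ∈ range (N + 3), (if i < k then (1 - p) * bb p (N + 1) k else 0))
        = ∑ j ∈ range (N + 2), (if i < j + 1 then (1 - p) * bb p (N + 1) (j + 1) else 0) := by
      rw [Finset.sum_range_succ']
      simp [Nat.not_lt_zero]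
    rw [← h2, Finset.sum_range_succ, bb_big p (show N + 1 < N + 2 by omega)]
    simp only [mul_zero, ite_self, add_zero]
    rw [hR, Finset.mul_sum]
    apply Finset.sum_congr rfl; intro j _
    split <;> ring
  rw [hfirst, hsecond]
  ring

lemma key_i (p : ℝ) (i : ℕ) : ∀ N : ℕ,
    p * ∑ n ∈ range (N + 1), (n.choose i : ℝ) * p ^ i * (1 - p) ^ (n - i)
      = ∑ k ∈ range (N + 2), (if i < k then bb p (N + 1) k else 0) := by
  intro N
  induction N with
  | zero =>
    rcases i with _ | j
    · norm_num [Finset.sum_range_succ, bb]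
    · simp only [zero_add]
      rw [Finset.sum_range_one, Finset.sum_range_succ, Finset.sum_range_one]
      rw [if_neg (by omega), if_neg (by omega)]
      simp [Nat.choose_eq_zero_of_lt (Nat.succ_pos j)]
  | succ N ih =>
    rw [Finset.sum_range_succ, mul_add, ih, pascal_step]
    rfl


/-- The `p`-binomial mean of a sequence. -/
noncomputable def binMean (p : ℝ) (a : ℕ → ℝ) (n : ℕ) : ℝ :=
  ∑ i ∈ Finset.range (n + 1), (n.choose i : ℝ) * p ^ i * (1 - p) ^ (n - i) * a i

/-- The arithmetic (Cesàro) mean of a sequence. -/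
noncomputable def cesaroMean (a : ℕ → ℝ) (n : ℕ) : ℝ :=
  (1 / (n + 1 : ℝ)) * ∑ i ∈ Finset.range (n + 1), a i

lemma key_identity (p : ℝ) (a : ℕ → ℝ) (N : ℕ) :
    p * ∑ n ∈ range (N + 1), binMean p a n
      = ∑ k ∈ range (N + 2), bb p (N + 1) k * ∑ i ∈ range k, a i := by
  have h1 : ∀ n ∈ range (N + 1), binMean p a n
      = ∑ i ∈ range (N + 1), (n.choose i : ℝ) * p ^ i * (1 - p) ^ (n - i) * a i := by
    intro n hn
    simp only [mem_range] at hn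
    unfold binMean
    apply Finset.sum_subset (Finset.range_subset_range.mpr (by omega))
    intro i _ hi
    have hni : n < i := by simp only [mem_range, not_lt] at hi; omega
    rw [Nat.choose_eq_zero_of_lt hni]
    simp
  rw [Finset.sum_congr rfl h1, Finset.sum_comm, Finset.mul_sum]
  have h2 : ∀ i ∈ range (N + 1),
      p * ∑ n ∈ range (N + 1), (n.choose i : ℝ) * p ^ i * (1 - p) ^ (n - i) * a i
        = ∑ k ∈ range (N + 2), (if i < k then bb p (N + 1) k * a i else 0) := by
    intro i _
    calc p * ∑ n ∈ range (N + 1), (n.choose i : ℝ) * p ^ i * (1 - p) ^ (n - i) * a i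
        = (p * ∑ n ∈ range (N + 1), (n.choose i : ℝ) * p ^ i * (1 - p) ^ (n - i)) * a i := by
          rw [← Finset.sum_mul, mul_assoc]
      _ = (∑ k ∈ range (N + 2), if i < k then bb p (N + 1) k else 0) * a i := by rw [key_i]
      _ = ∑ k ∈ range (N + 2), (if i < k then bb p (N + 1) k * a i else 0) := by
          rw [Finset.sum_mul]
          apply Finset.sum_congr rfl; intro k _
          split <;> simp
  rw [Finset.sum_congr rfl h2, Finset.sum_comm]
  apply Finset.sum_congr rfl
  intro k hk
  simp only [mem_range] at hk
  rw [Finset.mul_sum]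
  have hsub : (∑ i ∈ range k, if i < k then bb p (N + 1) k * a i else 0)
      = ∑ i ∈ range (N + 1), if i < k then bb p (N + 1) k * a i else 0 := by
    apply Finset.sum_subset (Finset.range_subset_range.mpr (by omega))
    intro i _ hi
    rw [if_neg (by simp only [mem_range, not_lt] at hi; omega)]
  rw [← hsub]
  apply Finset.sum_congr rfl
  intro i hi
  rw [if_pos (mem_range.mp hi)]

lemma tail_bound {p : ℝ} (h0 : 0 ≤ p) (h1 : p ≤ 1) (n : ℕ) (t : ℝ) (ht : 0 < t)
    (P : ℕ → Prop) [DecidablePred P] (hP : ∀ k ∈ range (n + 1), P k → t ≤ |(k : ℝ) - n * p|) :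
    ∑ k ∈ (range (n + 1)).filter P, bb p n k ≤ n * p * (1 - p) / t ^ 2 := by
  rw [le_div_iff₀ (by positivity)]
  calc (∑ k ∈ (range (n + 1)).filter P, bb p n k) * t ^ 2
      = ∑ k ∈ (range (n + 1)).filter P, bb p n k * t ^ 2 := by rw [Finset.sum_mul]
    _ ≤ ∑ k ∈ (range (n + 1)).filter P, ((k : ℝ) - n * p) ^ 2 * bb p n k := by
        apply Finset.sum_le_sum
        intro k hk
        simp only [mem_filter, mem_range] at hk
        have habs := hP k (mem_range.mpr hk.1) hk.2
        have h2 : t ^ 2 ≤ ((k : ℝ) - n * p) ^ 2 := by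
          rw [← sq_abs ((k : ℝ) - n * p)]
          exact pow_le_pow_left₀ ht.le habs 2
        rw [mul_comm]
        exact mul_le_mul_of_nonneg_right h2 (bb_nonneg h0 h1 n k)
    _ ≤ ∑ k ∈ range (n + 1), ((k : ℝ) - n * p) ^ 2 * bb p n k := by
        apply Finset.sum_le_sum_of_subset_of_nonneg (Finset.filter_subset _ _)
        intro k _ _
        exact mul_nonneg (sq_nonneg _) (bb_nonneg h0 h1 n k)
    _ = n * p * (1 - p) := sum_var_bb p n

lemma S_mono (a : ℕ → ℝ) (ha : ∀ n, 0 ≤ a n) {j k : ℕ} (h : j ≤ k) :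
    ∑ i ∈ range j, a i ≤ ∑ i ∈ range k, a i :=
  Finset.sum_le_sum_of_subset_of_nonneg (Finset.range_subset_range.mpr h) (fun i _ _ => ha i)

lemma S_nonneg (a : ℕ → ℝ) (ha : ∀ n, 0 ≤ a n) (k : ℕ) : 0 ≤ ∑ i ∈ range k, a i :=
  Finset.sum_nonneg (fun i _ => ha i)

lemma E_lower {p : ℝ} (h0 : 0 < p) (h1 : p < 1) (a : ℕ → ℝ) (ha : ∀ n, 0 ≤ a n)
    (n M : ℕ) (t : ℝ) (ht : 0 < t) (hM : (M : ℝ) + 1 ≤ n * p - t) :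
    (∑ i ∈ range (M + 1), a i) * (1 - n * p * (1 - p) / t ^ 2)
      ≤ ∑ k ∈ range (n + 1), bb p n k * ∑ i ∈ range k, a i := by
  have hbbnn : ∀ k, 0 ≤ bb p n k := fun k => bb_nonneg h0.le h1.le n k
  have hsplit := Finset.sum_filter_add_sum_filter_not (range (n + 1))
    (fun k => k < M + 1) (fun k => bb p n k * ∑ i ∈ range k, a i)
  have hmass := Finset.sum_filter_add_sum_filter_not (range (n + 1))
    (fun k => k < M + 1) (fun k => bb p n k)
  rw [sum_bb] at hmass
  have htail : ∑ k ∈ (range (n + 1)).filter (fun k => k < M + 1), bb p n k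
      ≤ n * p * (1 - p) / t ^ 2 := by
    apply tail_bound h0.le h1.le n t ht
    intro k hk hkM
    have hk' : (k : ℝ) ≤ M := by exact_mod_cast Nat.lt_succ_iff.mp hkM
    rw [le_abs]
    right
    linarith
  have hmass2 : 1 - n * p * (1 - p) / t ^ 2
      ≤ ∑ k ∈ (range (n + 1)).filter (fun k => ¬ k < M + 1), bb p n k := by
    linarith
  have hterm : ∀ k ∈ (range (n + 1)).filter (fun k => ¬ k < M + 1),
      bb p n k * ∑ i ∈ range (M + 1), a i ≤ bb p n k * ∑ i ∈ range k, a i := by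
    intro k hk
    simp only [mem_filter, mem_range, not_lt] at hk
    exact mul_le_mul_of_nonneg_left (S_mono a ha hk.2) (hbbnn k)
  calc (∑ i ∈ range (M + 1), a i) * (1 - n * p * (1 - p) / t ^ 2)
      ≤ (∑ i ∈ range (M + 1), a i)
          * ∑ k ∈ (range (n + 1)).filter (fun k => ¬ k < M + 1), bb p n k :=
        mul_le_mul_of_nonneg_left hmass2 (S_nonneg a ha _)
    _ = ∑ k ∈ (range (n + 1)).filter (fun k => ¬ k < M + 1),
          bb p n k * ∑ i ∈ range (M + 1), a i := by
        rw [Finset.mul_sum]; apply Finset.sum_congr rfl; intro k _; ring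
    _ ≤ ∑ k ∈ (range (n + 1)).filter (fun k => ¬ k < M + 1),
          bb p n k * ∑ i ∈ range k, a i := Finset.sum_le_sum hterm
    _ ≤ ∑ k ∈ range (n + 1), bb p n k * ∑ i ∈ range k, a i := by
        rw [← hsplit]
        have : 0 ≤ ∑ k ∈ (range (n + 1)).filter (fun k => k < M + 1),
            bb p n k * ∑ i ∈ range k, a i :=
          Finset.sum_nonneg (fun k _ => mul_nonneg (hbbnn k) (S_nonneg a ha k))
        linarith

lemma E_upper {p : ℝ} (h0 : 0 < p) (h1 : p < 1) (a : ℕ → ℝ) (ha : ∀ n, 0 ≤ a n)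
    (n M : ℕ) (t : ℝ) (ht : 0 < t) (hM : (n : ℝ) * p + t ≤ M) :
    ∑ k ∈ range (n + 1), bb p n k * ∑ i ∈ range k, a i
      ≤ (∑ i ∈ range (M + 1), a i)
        + (∑ i ∈ range (n + 1), a i) * (n * p * (1 - p) / t ^ 2) := by
  have hbbnn : ∀ k, 0 ≤ bb p n k := fun k => bb_nonneg h0.le h1.le n k
  have hsplit := Finset.sum_filter_add_sum_filter_not (range (n + 1))
    (fun k => k < M + 1) (fun k => bb p n k * ∑ i ∈ range k, a i)
  rw [← hsplit]
  have hpart1 : ∑ k ∈ (range (n + 1)).filter (fun k => k < M + 1),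
      bb p n k * ∑ i ∈ range k, a i ≤ ∑ i ∈ range (M + 1), a i := by
    calc ∑ k ∈ (range (n + 1)).filter (fun k => k < M + 1),
          bb p n k * ∑ i ∈ range k, a i
        ≤ ∑ k ∈ (range (n + 1)).filter (fun k => k < M + 1),
          bb p n k * ∑ i ∈ range (M + 1), a i := by
          apply Finset.sum_le_sum
          intro k hk
          simp only [mem_filter, mem_range] at hk
          exact mul_le_mul_of_nonneg_left (S_mono a ha (by omega : k ≤ M + 1)) (hbbnn k)
      _ = (∑ k ∈ (range (n + 1)).filter (fun k => k < M + 1), bb p n k)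
            * ∑ i ∈ range (M + 1), a i := by rw [Finset.sum_mul]
      _ ≤ 1 * ∑ i ∈ range (M + 1), a i := by
          apply mul_le_mul_of_nonneg_right _ (S_nonneg a ha _)
          rw [← sum_bb p n]
          exact Finset.sum_le_sum_of_subset_of_nonneg (Finset.filter_subset _ _)
            (fun k _ _ => hbbnn k)
      _ = ∑ i ∈ range (M + 1), a i := one_mul _
  have hpart2 : ∑ k ∈ (range (n + 1)).filter (fun k => ¬ k < M + 1),
      bb p n k * ∑ i ∈ range k, a i
      ≤ (∑ i ∈ range (n + 1), a i) * (n * p * (1 - p) / t ^ 2) := by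
    have htail : ∑ k ∈ (range (n + 1)).filter (fun k => ¬ k < M + 1), bb p n k
        ≤ n * p * (1 - p) / t ^ 2 := by
      apply tail_bound h0.le h1.le n t ht
      intro k _ hkM
      have hk' : (M : ℝ) + 1 ≤ k := by
        have : M + 1 ≤ k := by omega
        exact_mod_cast this
      rw [le_abs]
      left
      linarith
    calc ∑ k ∈ (range (n + 1)).filter (fun k => ¬ k < M + 1),
          bb p n k * ∑ i ∈ range k, a i
        ≤ ∑ k ∈ (range (n + 1)).filter (fun k => ¬ k < M + 1),
          bb p n k * ∑ i ∈ range (n + 1), a i := by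
          apply Finset.sum_le_sum
          intro k hk
          simp only [mem_filter, mem_range] at hk
          exact mul_le_mul_of_nonneg_left (S_mono a ha (by omega : k ≤ n + 1)) (hbbnn k)
      _ = (∑ k ∈ (range (n + 1)).filter (fun k => ¬ k < M + 1), bb p n k)
            * ∑ i ∈ range (n + 1), a i := by rw [Finset.sum_mul]
      _ ≤ (n * p * (1 - p) / t ^ 2) * ∑ i ∈ range (n + 1), a i :=
          mul_le_mul_of_nonneg_right htail (S_nonneg a ha _)
      _ = (∑ i ∈ range (n + 1), a i) * (n * p * (1 - p) / t ^ 2) := mul_comm _ _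
  linarith


lemma binMean_nonneg {p : ℝ} (h0 : 0 ≤ p) (h1 : p ≤ 1) (a : ℕ → ℝ) (ha : ∀ n, 0 ≤ a n) (n : ℕ) :
    0 ≤ binMean p a n := by
  apply Finset.sum_nonneg
  intro i _
  have : (0:ℝ) ≤ 1 - p := by linarith
  have := ha i
  positivity

lemma E_eq (p : ℝ) (a : ℕ → ℝ) {n : ℕ} (hn : 1 ≤ n) :
    ∑ k ∈ range (n + 1), bb p n k * ∑ i ∈ range k, a i
      = p * n * ((n : ℝ)⁻¹ * ∑ i ∈ range n, binMean p a i) := by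
  obtain ⟨m, rfl⟩ : ∃ m, n = m + 1 := ⟨n - 1, by omega⟩
  rw [← key_identity]
  have hne : ((m : ℝ) + 1) ≠ 0 := by positivity
  push_cast
  field_simp

lemma eventually_upper {p : ℝ} (hp0 : 0 < p) (hp1 : p < 1) (a : ℕ → ℝ) (ha : ∀ n, 0 ≤ a n)
    {l : ℝ} (hcb : Tendsto (fun n : ℕ => (n : ℝ)⁻¹ * ∑ i ∈ range n, binMean p a i) atTop (nhds l))
    {ε : ℝ} (hε0 : 0 < ε) (hεp : ε < p) {c : ℝ} (hc : l * p / (p - ε) < c) :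
    ∀ᶠ M : ℕ in atTop, cesaroMean a M < c := by
  have hpε : 0 < p - ε := by linarith
  set cb : ℕ → ℝ := fun n : ℕ => (n : ℝ)⁻¹ * ∑ i ∈ range n, binMean p a i with hcbdef
  set n : ℕ → ℕ := fun M => ⌈((M : ℝ) + 1) / (p - ε)⌉₊ with hndef
  have hn_lb : ∀ M : ℕ, ((M : ℝ) + 1) ≤ (p - ε) * n M := by
    intro M
    have h1 := Nat.le_ceil (((M : ℝ) + 1) / (p - ε))
    rw [div_le_iff₀ hpε] at h1
    linarith [h1]
  have hn_gtM : ∀ M : ℕ, M + 1 ≤ n M := by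
    intro M
    have h1 := hn_lb M
    have h2 : (p - ε) * (n M : ℝ) ≤ (n M : ℝ) := by
      have : (0:ℝ) ≤ (n M : ℝ) := Nat.cast_nonneg _
      nlinarith
    have : ((M : ℝ) + 1) ≤ (n M : ℝ) := by linarith
    exact_mod_cast this
  have hn_pos : ∀ M : ℕ, 0 < (n M : ℝ) := by
    intro M
    have := hn_gtM M
    have : (1 : ℕ) ≤ n M := by omega
    exact_mod_cast Nat.lt_of_lt_of_le Nat.zero_lt_one this
  have hn_tendsto : Tendsto n atTop atTop :=
    tendsto_atTop_mono (fun M => le_trans (Nat.le_succ M) (hn_gtM M)) tendsto_id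
  have hn_ub : ∀ M : ℕ, (n M : ℝ) < ((M : ℝ) + 1) / (p - ε) + 1 := by
    intro M
    exact Nat.ceil_lt_add_one (by positivity)
  set δ : ℕ → ℝ := fun M => p * (1 - p) / (ε ^ 2 * n M) with hδdef
  have key : ∀ M : ℕ, (∑ i ∈ range (M + 1), a i) * (1 - δ M) ≤ p * n M * cb (n M) := by
    intro M
    have hnM1 : 1 ≤ n M := by have := hn_gtM M; omega
    have ht : 0 < ε * (n M : ℝ) := by positivity
    have hcond : (M : ℝ) + 1 ≤ (n M : ℝ) * p - ε * (n M : ℝ) := by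
      have := hn_lb M; nlinarith [hn_pos M]
    have hEl := E_lower hp0 hp1 a ha (n M) M (ε * n M) ht hcond
    have hrw : (n M : ℝ) * p * (1 - p) / (ε * (n M : ℝ)) ^ 2 = δ M := by
      rw [hδdef]
      have h1 : (n M : ℝ) ≠ 0 := (hn_pos M).ne'
      field_simp
    rw [hrw, E_eq p a hnM1] at hEl
    exact hEl
  have hδ0 : Tendsto δ atTop (nhds 0) := by
    apply Tendsto.div_atTop (tendsto_const_nhds (x := p * (1 - p)))
    apply Tendsto.const_mul_atTop (by positivity : (0:ℝ) < ε ^ 2)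
    exact tendsto_natCast_atTop_atTop.comp hn_tendsto
  have hRatio : Tendsto (fun M : ℕ => (n M : ℝ) / ((M : ℝ) + 1)) atTop (nhds (1 / (p - ε))) := by
    apply tendsto_of_tendsto_of_tendsto_of_le_of_le
      (g := fun _ : ℕ => 1 / (p - ε)) (h := fun M : ℕ => 1 / (p - ε) + 1 / ((M : ℝ) + 1))
    · exact tendsto_const_nhds
    · have h2 := tendsto_one_div_add_atTop_nhds_zero_nat (𝕜 := ℝ)
      have := tendsto_const_nhds (x := 1 / (p - ε)) (f := atTop (α := ℕ)) |>.add h2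
      simpa using this
    · intro M
      rw [div_le_div_iff₀ hpε (by positivity)]
      have := hn_lb M
      linarith
    · intro M
      have h1 := hn_ub M
      have hM1 : (0:ℝ) < (M : ℝ) + 1 := by positivity
      show (n M : ℝ) / ((M : ℝ) + 1) ≤ 1 / (p - ε) + 1 / ((M : ℝ) + 1)
      rw [div_le_iff₀ hM1]
      have heq : (1 / (p - ε) + 1 / ((M:ℝ) + 1)) * ((M:ℝ) + 1) = ((M:ℝ) + 1) / (p - ε) + 1 := by
        field_simp
      rw [heq]
      exact h1.le
  have hfU : Tendsto (fun M : ℕ => p * ((n M : ℝ) / ((M : ℝ) + 1)) * cb (n M) / (1 - δ M))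
      atTop (nhds (l * p / (p - ε))) := by
    have h1 : Tendsto (fun M : ℕ => p * ((n M : ℝ) / ((M : ℝ) + 1)) * cb (n M)) atTop
        (nhds (p * (1 / (p - ε)) * l)) :=
      (Tendsto.const_mul p hRatio).mul (hcb.comp hn_tendsto)
    have h2 : Tendsto (fun M : ℕ => 1 - δ M) atTop (nhds (1 - 0)) :=
      tendsto_const_nhds.sub hδ0
    have h3 := h1.div h2 (by norm_num)
    have heq : p * (1 / (p - ε)) * l / (1 - 0) = l * p / (p - ε) := by
      rw [sub_zero, div_one]; ring
    rw [heq] at h3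
    exact h3
  have hev1 : ∀ᶠ M : ℕ in atTop, p * ((n M : ℝ) / ((M : ℝ) + 1)) * cb (n M) / (1 - δ M) < c :=
    hfU.eventually_lt_const hc
  have hev2 : ∀ᶠ M : ℕ in atTop, δ M < 1 / 2 :=
    hδ0.eventually_lt_const (by norm_num)
  filter_upwards [hev1, hev2] with M h1 h2
  have hδpos : 0 < 1 - δ M := by linarith
  have hM1 : (0:ℝ) < (M : ℝ) + 1 := by positivity
  have hkey := key M
  have hS : cesaroMean a M = (1 / ((M:ℝ) + 1)) * ∑ i ∈ range (M + 1), a i := by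
    unfold cesaroMean
    ring_nf
  calc cesaroMean a M = (1 / ((M:ℝ) + 1)) * ∑ i ∈ range (M + 1), a i := hS
    _ ≤ p * ((n M : ℝ) / ((M : ℝ) + 1)) * cb (n M) / (1 - δ M) := by
        rw [← sub_nonneg]
        have expand : p * ((n M : ℝ) / ((M:ℝ) + 1)) * cb (n M) / (1 - δ M)
            - (1 / ((M:ℝ) + 1)) * ∑ i ∈ range (M + 1), a i
            = (p * (n M : ℝ) * cb (n M) - (∑ i ∈ range (M + 1), a i) * (1 - δ M))
              / ((1 - δ M) * ((M:ℝ) + 1)) := by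
          field_simp
        rw [expand]
        apply div_nonneg (by linarith) (by positivity)
    _ < c := h1

lemma eventually_lower {p : ℝ} (hp0 : 0 < p) (hp1 : p < 1) (a : ℕ → ℝ) (ha : ∀ n, 0 ≤ a n)
    {l : ℝ} (hcb : Tendsto (fun n : ℕ => (n : ℝ)⁻¹ * ∑ i ∈ range n, binMean p a i) atTop (nhds l))
    {C : ℝ} (hC0 : 0 ≤ C) (hCb : ∀ k : ℕ, ∑ i ∈ range k, a i ≤ C * ((k : ℝ) + 1))
    {ε : ℝ} (hε0 : 0 < ε) {c : ℝ} (hc : c < l * p / (p + ε)) :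
    ∀ᶠ M : ℕ in atTop, c < cesaroMean a M := by
  have hpε : 0 < p + ε := by linarith
  set cb : ℕ → ℝ := fun n : ℕ => (n : ℝ)⁻¹ * ∑ i ∈ range n, binMean p a i with hcbdef
  set n : ℕ → ℕ := fun M => ⌊(M : ℝ) / (p + ε)⌋₊ with hndef
  have hn_ub : ∀ M : ℕ, (p + ε) * (n M : ℝ) ≤ M := by
    intro M
    have h1 := Nat.floor_le (show (0:ℝ) ≤ (M : ℝ) / (p + ε) by positivity)
    rw [le_div_iff₀ hpε] at h1
    linarith
  have hn_lb : ∀ M : ℕ, (M : ℝ) / (p + ε) - 1 < n M := fun M => Nat.sub_one_lt_floor _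
  have hn_tendsto : Tendsto n atTop atTop :=
    tendsto_nat_floor_atTop.comp (tendsto_natCast_atTop_atTop.atTop_div_const hpε)
  set δ : ℕ → ℝ := fun M => p * (1 - p) / (ε ^ 2 * n M) with hδdef
  set corr : ℕ → ℝ := fun M => C * ((n M : ℝ) + 2) * δ M with hcorrdef
  have hδnn : ∀ M, 0 ≤ δ M := by
    intro M
    have : (0:ℝ) ≤ 1 - p := by linarith
    positivity
  have hcorrnn : ∀ M, 0 ≤ corr M := by
    intro M
    have h1 := hδnn M
    positivity
  have key : ∀ M : ℕ, 1 ≤ n M →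
      p * n M * cb (n M) ≤ (∑ i ∈ range (M + 1), a i) + corr M := by
    intro M hnM1
    have hn_pos : (0:ℝ) < (n M : ℝ) := by exact_mod_cast hnM1
    have ht : 0 < ε * (n M : ℝ) := by positivity
    have hcond : (n M : ℝ) * p + ε * (n M : ℝ) ≤ M := by
      have := hn_ub M; nlinarith
    have hEu := E_upper hp0 hp1 a ha (n M) M (ε * n M) ht hcond
    have hrw : (n M : ℝ) * p * (1 - p) / (ε * (n M : ℝ)) ^ 2 = δ M := by
      rw [hδdef]
      have h1 : (n M : ℝ) ≠ 0 := hn_pos.ne'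
      field_simp
    rw [hrw, E_eq p a hnM1] at hEu
    have hEu' : p * (n M : ℝ) * cb (n M)
        ≤ (∑ i ∈ range (M + 1), a i) + (∑ i ∈ range (n M + 1), a i) * δ M := hEu
    have hScorr : (∑ i ∈ range (n M + 1), a i) * δ M ≤ corr M := by
      rw [hcorrdef]
      have h1 := hCb (n M + 1)
      have h2 : (∑ i ∈ range (n M + 1), a i) ≤ C * ((n M : ℝ) + 2) := by
        have := h1
        push_cast at this
        linarith
      exact mul_le_mul_of_nonneg_right h2 (hδnn M)
    linarith [hEu', hScorr]
  have hRatio : Tendsto (fun M : ℕ => (n M : ℝ) / ((M : ℝ) + 1)) atTop (nhds (1 / (p + ε))) := by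
    apply tendsto_of_tendsto_of_tendsto_of_le_of_le
      (g := fun M : ℕ => 1 / (p + ε) * (1 - 1 / ((M:ℝ) + 1)) - 1 / ((M:ℝ) + 1))
      (h := fun _ : ℕ => 1 / (p + ε))
    · have h2 := tendsto_one_div_add_atTop_nhds_zero_nat (𝕜 := ℝ)
      have h3 : Tendsto (fun M : ℕ => 1 / (p + ε) * (1 - 1 / ((M:ℝ) + 1)) - 1 / ((M:ℝ) + 1))
          atTop (nhds (1 / (p + ε) * (1 - 0) - 0)) :=
        ((tendsto_const_nhds.mul (tendsto_const_nhds.sub h2))).sub h2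
      have heq : 1 / (p + ε) * ((1:ℝ) - 0) - 0 = 1 / (p + ε) := by ring
      rwa [heq] at h3
    · exact tendsto_const_nhds
    · intro M
      have h1 := hn_lb M
      have hM1 : (0:ℝ) < (M : ℝ) + 1 := by positivity
      have heq : 1 / (p + ε) * (1 - 1 / ((M:ℝ) + 1)) - 1 / ((M:ℝ) + 1)
          = ((M : ℝ) / (p + ε) - 1) / ((M:ℝ) + 1) := by
        field_simp
        ring
      show 1 / (p + ε) * (1 - 1 / ((M:ℝ) + 1)) - 1 / ((M:ℝ) + 1) ≤ (n M : ℝ) / ((M : ℝ) + 1)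
      rw [heq]
      gcongr
    · intro M
      have hM1 : (0:ℝ) < (M : ℝ) + 1 := by positivity
      show (n M : ℝ) / ((M : ℝ) + 1) ≤ 1 / (p + ε)
      rw [div_le_div_iff₀ hM1 hpε]
      have := hn_ub M
      nlinarith
  have hcorr0 : Tendsto (fun M : ℕ => corr M / ((M:ℝ) + 1)) atTop (nhds 0) := by
    have hn1 : ∀ᶠ M : ℕ in atTop, 1 ≤ n M := hn_tendsto.eventually_ge_atTop 1
    have hq : (0:ℝ) ≤ 1 - p := by linarith
    apply tendsto_of_tendsto_of_tendsto_of_le_of_le'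
      (g := fun _ : ℕ => (0:ℝ))
      (h := fun M : ℕ => (3 * C * (p * (1 - p)) / ε ^ 2) * (1 / ((M:ℝ) + 1)))
      tendsto_const_nhds
    · have h2 := tendsto_one_div_add_atTop_nhds_zero_nat (𝕜 := ℝ)
      have h3 := Tendsto.const_mul (3 * C * (p * (1 - p)) / ε ^ 2) h2
      rwa [mul_zero] at h3
    · apply Eventually.of_forall
      intro M
      exact div_nonneg (hcorrnn M) (by positivity)
    · filter_upwards [hn1] with M hM
      have hn_pos : (1:ℝ) ≤ (n M : ℝ) := by exact_mod_cast hM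
      have h2 : corr M ≤ 3 * C * (p * (1 - p)) / ε ^ 2 := by
        rw [hcorrdef, hδdef]
        have h3 : ((n M:ℝ) + 2) ≤ 3 * (n M : ℝ) := by linarith
        calc C * ((n M:ℝ) + 2) * (p * (1 - p) / (ε ^ 2 * (n M : ℝ)))
            ≤ C * (3 * (n M:ℝ)) * (p * (1 - p) / (ε ^ 2 * (n M : ℝ))) := by
              apply mul_le_mul_of_nonneg_right (mul_le_mul_of_nonneg_left h3 hC0)
              positivity
          _ = 3 * C * (p * (1 - p)) / ε ^ 2 := by
              field_simp
      show corr M / ((M:ℝ) + 1) ≤ (3 * C * (p * (1 - p)) / ε ^ 2) * (1 / ((M:ℝ) + 1))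
      rw [div_eq_mul_one_div]
      exact mul_le_mul_of_nonneg_right h2 (by positivity)
  have hfL : Tendsto (fun M : ℕ => p * ((n M : ℝ) / ((M:ℝ) + 1)) * cb (n M) - corr M / ((M:ℝ) + 1))
      atTop (nhds (l * p / (p + ε))) := by
    have h1 : Tendsto (fun M : ℕ => p * ((n M : ℝ) / ((M : ℝ) + 1)) * cb (n M)) atTop
        (nhds (p * (1 / (p + ε)) * l)) :=
      (Tendsto.const_mul p hRatio).mul (hcb.comp hn_tendsto)
    have h3 := h1.sub hcorr0
    have heq : p * (1 / (p + ε)) * l - 0 = l * p / (p + ε) := by ring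
    rwa [heq] at h3
  have hev1 : ∀ᶠ M : ℕ in atTop,
      c < p * ((n M : ℝ) / ((M:ℝ) + 1)) * cb (n M) - corr M / ((M:ℝ) + 1) :=
    hfL.eventually_const_lt hc
  have hn1 : ∀ᶠ M : ℕ in atTop, 1 ≤ n M := hn_tendsto.eventually_ge_atTop 1
  filter_upwards [hev1, hn1] with M h1 h2
  have hkey := key M h2
  have hM1 : (0:ℝ) < (M : ℝ) + 1 := by positivity
  have hS : cesaroMean a M = (1 / ((M:ℝ) + 1)) * ∑ i ∈ range (M + 1), a i := by
    unfold cesaroMean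
    norm_num
  calc c < p * ((n M : ℝ) / ((M:ℝ) + 1)) * cb (n M) - corr M / ((M:ℝ) + 1) := h1
    _ ≤ cesaroMean a M := by
      rw [hS, ← sub_nonneg]
      have expand : (1 / ((M:ℝ) + 1)) * (∑ i ∈ range (M + 1), a i)
          - (p * ((n M : ℝ) / ((M:ℝ) + 1)) * cb (n M) - corr M / ((M:ℝ) + 1))
          = ((∑ i ∈ range (M + 1), a i) + corr M - p * (n M : ℝ) * cb (n M)) / ((M:ℝ) + 1) := by
        field_simp
        ring
      rw [expand]
      apply div_nonneg (by linarith) hM1.le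

theorem binomial_mean_tendsto_imp_cesaro_tendsto
    (a : ℕ → ℝ) (ha : ∀ n, 0 ≤ a n) (p : ℝ) (hp0 : 0 < p) (hp1 : p < 1) (l : ℝ)
    (h : Tendsto (binMean p a) atTop (nhds l)) :
    Tendsto (cesaroMean a) atTop (nhds l) := by
  have hcb : Tendsto (fun n : ℕ => (n : ℝ)⁻¹ * ∑ i ∈ range n, binMean p a i) atTop (nhds l) :=
    h.cesaro
  have hl0 : 0 ≤ l := ge_of_tendsto' h (fun n => binMean_nonneg hp0.le hp1.le a ha n)
  -- a linear bound on partial sums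
  have hcup := eventually_upper hp0 hp1 a ha hcb (ε := p / 2) (by positivity) (by linarith)
    (c := l * p / (p - p / 2) + 1) (lt_add_one _)
  obtain ⟨M₀, hM₀⟩ := eventually_atTop.mp hcup
  set c₀ : ℝ := l * p / (p - p / 2) + 1 with hc₀def
  have hc₀0 : 0 ≤ c₀ := by
    have h1 : 0 ≤ l * p / (p - p / 2) := div_nonneg (mul_nonneg hl0 hp0.le) (by linarith)
    rw [hc₀def]; linarith
  set C : ℝ := max c₀ (∑ i ∈ range (M₀ + 1), a i) with hCdef
  have hC0 : 0 ≤ C := le_trans hc₀0 (le_max_left _ _)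
  have hCb : ∀ k : ℕ, ∑ i ∈ range k, a i ≤ C * ((k : ℝ) + 1) := by
    intro k
    by_cases hk : k ≤ M₀ + 1
    · calc ∑ i ∈ range k, a i ≤ ∑ i ∈ range (M₀ + 1), a i := S_mono a ha hk
        _ ≤ C := le_max_right _ _
        _ ≤ C * ((k : ℝ) + 1) := le_mul_of_one_le_right hC0 (by linarith [Nat.cast_nonneg (α := ℝ) k])
    · obtain ⟨M, rfl⟩ : ∃ M, k = M + 1 := ⟨k - 1, by omega⟩
      have hMM₀ : M₀ ≤ M := by omega
      have h1 := hM₀ M hMM₀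
      have hM1 : (0:ℝ) < (M : ℝ) + 1 := by positivity
      have h3 : cesaroMean a M = (∑ i ∈ range (M + 1), a i) / ((M:ℝ) + 1) := by
        unfold cesaroMean
        ring
      rw [h3, div_lt_iff₀ hM1] at h1
      have h4 : c₀ * ((M:ℝ) + 1) ≤ C * ((M:ℝ) + 1) :=
        mul_le_mul_of_nonneg_right (le_max_left _ _) hM1.le
      have h5 : C * ((M:ℝ) + 1) ≤ C * (((M + 1 : ℕ) : ℝ) + 1) := by
        push_cast
        nlinarith
      linarith
  rw [tendsto_order]
  constructor
  · intro c hcl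
    have hlc : 0 < l - c := by linarith
    set ε : ℝ := p * (l - c) / (2 * (l + 1)) with hεdef
    have hl1 : (0:ℝ) < l + 1 := by linarith
    have hε0 : 0 < ε := by positivity
    apply eventually_lower hp0 hp1 a ha hcb hC0 hCb hε0
    have hpε : 0 < p + ε := by linarith
    rw [lt_div_iff₀ hpε]
    have hεeq : ε * (2 * (l + 1)) = p * (l - c) := by
      rw [hεdef]; field_simp
    nlinarith [hεeq, mul_pos hp0 hlc, hl0, hcl, hε0, mul_pos hε0 hlc]
  · intro c hcl
    have hc0 : 0 < c := by linarith
    set ε : ℝ := min (p / 2) (p * (c - l) / (2 * c)) with hεdef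
    have hε0 : 0 < ε := by
      apply lt_min (by positivity)
      have : 0 < c - l := by linarith
      positivity
    have hεp : ε < p := lt_of_le_of_lt (min_le_left _ _) (by linarith)
    apply eventually_upper hp0 hp1 a ha hcb hε0 hεp
    have hpε : 0 < p - ε := by linarith
    rw [div_lt_iff₀ hpε]
    have h1 : ε ≤ p * (c - l) / (2 * c) := min_le_right _ _
    have h2 : c * (p * (c - l) / (2 * c)) = p * (c - l) / 2 := by
      field_simp
    have h3 : c * ε ≤ p * (c - l) / 2 := by
      calc c * ε ≤ c * (p * (c - l) / (2 * c)) := mul_le_mul_of_nonneg_left h1 hc0.le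
        _ = p * (c - l) / 2 := h2
    nlinarith [mul_pos hp0 (show (0:ℝ) < c - l by linarith)]
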